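/- Let (Ω, μ) be a probability space on a standard Borel space, Y₀, Y₁ : Ω → ℝ bounded measurable random variables, and D, T : Ω → {0,1} measurable. Assume the pair (Y₀, Y₁) is conditionally independent of D given the σ-algebra generated by T. Let Y := Y₁·1{D = 1} + Y₀·1{D = 0}. Fix t ∈ {0,1} with μ(T = t) > 0, and let p(t) := μ(D = 1, T = t)/μ(T = t) with 0 < p(t) < 1. Then E[ Y·1{D = 1, T = t}/p(t) − Y·1{D = 0, T = t}/(1 − p(t)) ] = E[(Y₁ − Y₀)·1{T = t}]. -/

import Mathlib

open MeasureTheory ProbabilityTheory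

lemma aux_comap_const {Ω α : Type*} [MeasurableSpace Ω] {T : Ω → α} {g : Ω → ℝ}
    (hg : StronglyMeasurable[MeasurableSpace.comap T ⊤] g) {ω₁ ω₂ : Ω} (h : T ω₁ = T ω₂) :
    g ω₁ = g ω₂ := by
  obtain ⟨u, -, hu⟩ := hg.measurable (MeasurableSet.singleton (g ω₁))
  have h1 : ω₁ ∈ T ⁻¹' u := by rw [hu]; exact rfl
  have h2 : ω₂ ∈ T ⁻¹' u := by rw [Set.mem_preimage, ← h]; exact h1
  rw [hu] at h2
  exact h2.symm

lemma aux_int_bdd {Ω : Type*} [MeasurableSpace Ω] (μ : Measure Ω) [IsFiniteMeasure μ]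
    {f : Ω → ℝ} {C : ℝ} (hf : Measurable f) (hb : ∀ ω, |f ω| ≤ C) : Integrable f μ :=
  (integrable_const C).mono' hf.aestronglyMeasurable (Filter.Eventually.of_forall hb)

-- atom lemma: integral over atom of condexp-indicator
lemma aux_key {Ω : Type*} [MeasurableSpace Ω] [StandardBorelSpace Ω] [Nonempty Ω]
    (μ : Measure Ω) [IsProbabilityMeasure μ]
    {X : Ω → ℝ × ℝ} {D T : Ω → Fin 2} (hX : Measurable X) (hD : Measurable D)
    (hT : Measurable T)
    (hCI : CondIndepFun (MeasurableSpace.comap T ⊤) hT.comap_le X D μ)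
    (t : Fin 2) (ht : 0 < μ {ω | T ω = t})
    (s : Set (ℝ × ℝ)) (u : Set (Fin 2)) (hs : MeasurableSet s) (hu : MeasurableSet u) :
    μ (X ⁻¹' s ∩ D ⁻¹' u ∩ {ω | T ω = t}) * μ {ω | T ω = t}
      = μ (X ⁻¹' s ∩ {ω | T ω = t}) * μ (D ⁻¹' u ∩ {ω | T ω = t}) := by
  classical
  set S : Set Ω := {ω | T ω = t} with hSdef
  have hSmeas : MeasurableSet S := hT (MeasurableSet.singleton t)
  have hSm' : MeasurableSet[MeasurableSpace.comap T ⊤] S := ⟨{t}, trivial, rfl⟩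
  have hSne : μ S ≠ 0 := ht.ne'
  have hSfin : μ S ≠ ⊤ := measure_ne_top μ S
  have hle : MeasurableSpace.comap T (⊤ : MeasurableSpace (Fin 2)) ≤ (inferInstance : MeasurableSpace Ω) := hT.comap_le
  obtain ⟨ω₀, hω₀⟩ : S.Nonempty := nonempty_of_measure_ne_zero hSne
  set A : Set Ω := X ⁻¹' s with hAdef
  set B : Set Ω := D ⁻¹' u with hBdef
  have hA : MeasurableSet A := hX hs
  have hB : MeasurableSet B := hD hu
  have hCE := (condIndepFun_iff_condExp_inter_preimage_eq_mul hX hD).mp hCI s u hs hu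
  -- integrate both sides over S
  have hint : ∫ x in S, (μ⟦A ∩ B | MeasurableSpace.comap T ⊤⟧) x ∂μ
      = ∫ x in S, (μ⟦A | MeasurableSpace.comap T ⊤⟧) x * (μ⟦B | MeasurableSpace.comap T ⊤⟧) x ∂μ :=
    setIntegral_congr_ae hSmeas (hCE.mono fun x hx _ => hx)
  -- generic computations
  have hcond_int : ∀ E : Set Ω, MeasurableSet E →
      ∫ x in S, (μ⟦E | MeasurableSpace.comap T ⊤⟧) x ∂μ = (μ (E ∩ S)).toReal := by
    intro E hE
    rw [setIntegral_condExp hle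
      ((integrable_const (1:ℝ)).indicator hE) hSm']
    rw [setIntegral_indicator hE]
    simp [Set.inter_comm, measureReal_def]
  have hconst : ∀ E : Set Ω, ∀ x ∈ S, (μ⟦E | MeasurableSpace.comap T ⊤⟧) x = (μ⟦E | MeasurableSpace.comap T ⊤⟧) ω₀ := by
    intro E x hx
    exact aux_comap_const stronglyMeasurable_condExp (by rw [Set.mem_setOf_eq.mp hx, hω₀])
  set a := (μ⟦A | MeasurableSpace.comap T ⊤⟧) ω₀ with ha
  set b := (μ⟦B | MeasurableSpace.comap T ⊤⟧) ω₀ with hb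
  have eqA : a * (μ S).toReal = (μ (A ∩ S)).toReal := by
    rw [← hcond_int A hA, setIntegral_congr_fun hSmeas (hconst A), setIntegral_const, smul_eq_mul, measureReal_def]
    ring
  have eqB : b * (μ S).toReal = (μ (B ∩ S)).toReal := by
    rw [← hcond_int B hB, setIntegral_congr_fun hSmeas (hconst B), setIntegral_const, smul_eq_mul, measureReal_def]
    ring
  have eqAB : (μ (A ∩ B ∩ S)).toReal = (μ S).toReal * (a * b) := by
    rw [← hcond_int _ (hA.inter hB), hint,
      setIntegral_congr_fun hSmeas (fun x hx => by rw [hconst A x hx, hconst B x hx]),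
      setIntegral_const, smul_eq_mul, measureReal_def]
  have hreal : (μ (A ∩ B ∩ S) * μ S).toReal = (μ (A ∩ S) * μ (B ∩ S)).toReal := by
    rw [ENNReal.toReal_mul, ENNReal.toReal_mul, eqAB, ← eqA, ← eqB]
    ring
  exact (ENNReal.toReal_eq_toReal_iff'
    (ENNReal.mul_ne_top (measure_ne_top μ _) hSfin)
    (ENNReal.mul_ne_top (measure_ne_top μ _) (measure_ne_top μ _))).mp hreal

/-- In a strictly strategy-proof RCT, the inverse-propensity-weighted
estimand is unbiased for `β_t = E[(Y₁-Y₀) 1{T=t}]`: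
`E[ Y 1{D=1,T=t}/p(t) - Y 1{D=0,T=t}/(1-p(t)) ] = E[(Y₁-Y₀) 1{T=t}]`,
where `p(t) = P(D=1, T=t)/P(T=t)`. -/
theorem stmt_13 {Ω : Type*} [MeasurableSpace Ω] [StandardBorelSpace Ω] [Nonempty Ω]
    (μ : Measure Ω) [IsProbabilityMeasure μ]
    (Y0 Y1 : Ω → ℝ) (hY0m : Measurable Y0) (hY1m : Measurable Y1)
    (M : ℝ) (hY0b : ∀ ω, |Y0 ω| ≤ M) (hY1b : ∀ ω, |Y1 ω| ≤ M)
    (D T : Ω → Fin 2) (hD : Measurable D) (hT : Measurable T)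
    (hCI : CondIndepFun (MeasurableSpace.comap T ⊤) hT.comap_le
      (fun ω => (Y0 ω, Y1 ω)) D μ)
    (Y : Ω → ℝ)
    (hY : ∀ ω, Y ω = Y1 ω * (if D ω = 1 then 1 else 0) + Y0 ω * (if D ω = 0 then 1 else 0))
    (t : Fin 2) (ht : 0 < μ {ω | T ω = t})
    (p : ℝ)
    (hp : p = (μ {ω | D ω = 1 ∧ T ω = t}).toReal / (μ {ω | T ω = t}).toReal)
    (hp0 : 0 < p) (hp1 : p < 1) :
    ∫ ω, (Y ω * (if D ω = 1 ∧ T ω = t then 1 else 0) / p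
        - Y ω * (if D ω = 0 ∧ T ω = t then 1 else 0) / (1 - p)) ∂μ
      = ∫ ω, (Y1 ω - Y0 ω) * (if T ω = t then 1 else 0) ∂μ := by
  classical
  set S : Set Ω := {ω | T ω = t} with hSdef
  have hSmeas : MeasurableSet S := hT (MeasurableSet.singleton t)
  have hSne : μ S ≠ 0 := ht.ne'
  have hSfin : μ S ≠ ⊤ := measure_ne_top μ S
  have pairm : Measurable (fun ω => (Y0 ω, Y1 ω)) := hY0m.prodMk hY1m
  have key := aux_key μ pairm hD hT hCI t ht
  -- the normalized restricted measure
  set ν : Measure Ω := (μ S)⁻¹ • μ.restrict S with hνdef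
  have hν_apply : ∀ E : Set Ω, MeasurableSet E → ν E = (μ S)⁻¹ * μ (E ∩ S) := by
    intro E hE
    rw [hνdef, Measure.smul_apply, Measure.restrict_apply hE, smul_eq_mul]
  have hνprob : IsProbabilityMeasure ν := by
    constructor
    rw [hν_apply _ MeasurableSet.univ, Set.univ_inter]
    exact ENNReal.inv_mul_cancel hSne hSfin
  have hIndep : IndepFun (fun ω => (Y0 ω, Y1 ω)) D ν := by
    rw [indepFun_iff_measure_inter_preimage_eq_mul]
    intro s u hs hu
    have hk := key s u hs hu
    rw [hν_apply _ ((pairm hs).inter (hD hu)), hν_apply _ (pairm hs), hν_apply _ (hD hu)]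
    have h1 : (μ S)⁻¹ * μ S = 1 := ENNReal.inv_mul_cancel hSne hSfin
    calc (μ S)⁻¹ * μ ((fun ω => (Y0 ω, Y1 ω)) ⁻¹' s ∩ D ⁻¹' u ∩ S)
        = (μ S)⁻¹ * μ ((fun ω => (Y0 ω, Y1 ω)) ⁻¹' s ∩ D ⁻¹' u ∩ S) * ((μ S)⁻¹ * μ S) := by
          rw [h1, mul_one]
      _ = (μ S)⁻¹ * (μ S)⁻¹ * (μ ((fun ω => (Y0 ω, Y1 ω)) ⁻¹' s ∩ D ⁻¹' u ∩ S) * μ S) := by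
          ring
      _ = (μ S)⁻¹ * (μ S)⁻¹ * (μ ((fun ω => (Y0 ω, Y1 ω)) ⁻¹' s ∩ S) * μ (D ⁻¹' u ∩ S)) := by
          rw [hk]
      _ = (μ S)⁻¹ * μ ((fun ω => (Y0 ω, Y1 ω)) ⁻¹' s ∩ S) * ((μ S)⁻¹ * μ (D ⁻¹' u ∩ S)) := by
          ring
  -- indicator helpers
  have hg1 : Measurable (fun x : Fin 2 => if x = 1 then (1:ℝ) else 0) := measurable_of_finite _
  have hg0 : Measurable (fun x : Fin 2 => if x = 0 then (1:ℝ) else 0) := measurable_of_finite _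
  have hInd1 : IndepFun Y1 (fun ω => if D ω = 1 then (1:ℝ) else 0) ν :=
    hIndep.comp measurable_snd hg1
  have hInd0 : IndepFun Y0 (fun ω => if D ω = 0 then (1:ℝ) else 0) ν :=
    hIndep.comp measurable_fst hg0
  have hind1m : Measurable (fun ω => if D ω = 1 then (1:ℝ) else 0) := hg1.comp hD
  have hind0m : Measurable (fun ω => if D ω = 0 then (1:ℝ) else 0) := hg0.comp hD
  have hmul1 : ∫ ω, Y1 ω * (if D ω = 1 then (1:ℝ) else 0) ∂ν
      = (∫ ω, Y1 ω ∂ν) * (∫ ω, (if D ω = 1 then (1:ℝ) else 0) ∂ν) :=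
    hInd1.integral_fun_mul_eq_mul_integral hY1m.aestronglyMeasurable hind1m.aestronglyMeasurable
  have hmul0 : ∫ ω, Y0 ω * (if D ω = 0 then (1:ℝ) else 0) ∂ν
      = (∫ ω, Y0 ω ∂ν) * (∫ ω, (if D ω = 0 then (1:ℝ) else 0) ∂ν) :=
    hInd0.integral_fun_mul_eq_mul_integral hY0m.aestronglyMeasurable hind0m.aestronglyMeasurable
  have hone : ∀ d : Fin 2, ∫ ω, (if D ω = d then (1:ℝ) else 0) ∂ν = (ν (D ⁻¹' {d})).toReal := by
    intro d
    rw [← measureReal_def, ← integral_indicator_one (hD (measurableSet_singleton d))]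
    congr 1
    ext ω
    simp [Set.indicator_apply]
  have hν1 : (ν (D ⁻¹' {1})).toReal = p := by
    rw [hν_apply _ (hD (measurableSet_singleton 1))]
    have hset : D ⁻¹' {1} ∩ S = {ω | D ω = 1 ∧ T ω = t} := by
      ext ω
      simp [hSdef]
    rw [hset, ENNReal.toReal_mul, ENNReal.toReal_inv, hp]
    ring
  have hν0 : (ν (D ⁻¹' {0})).toReal = 1 - p := by
    have h2 : ∀ x : Fin 2, x = 0 ↔ ¬ x = 1 := by decide
    have hcompl : D ⁻¹' ({0} : Set (Fin 2)) = (D ⁻¹' {1})ᶜ := by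
      ext ω
      simpa using h2 (D ω)
    rw [hcompl, measure_compl (hD (measurableSet_singleton 1)) (measure_ne_top ν _),
      measure_univ, ENNReal.toReal_sub_of_le prob_le_one ENNReal.one_ne_top,
      ENNReal.toReal_one, hν1]
  have hc : (0:ℝ) < (μ S).toReal := ENNReal.toReal_pos hSne hSfin
  have hν_int : ∀ f : Ω → ℝ, ∫ ω, f ω ∂ν = (μ S).toReal⁻¹ * ∫ ω in S, f ω ∂μ := by
    intro f
    rw [hνdef, integral_smul_measure, ENNReal.toReal_inv, smul_eq_mul]
  have hSint : ∀ f : Ω → ℝ,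
      (∫ ω in S, f ω ∂μ) = ∫ ω, f ω * (if T ω = t then 1 else 0) ∂μ := by
    intro f
    rw [← integral_indicator hSmeas]
    congr 1
    ext ω
    by_cases h : T ω = t <;> simp [Set.indicator_apply, hSdef, h]
  -- pointwise identities
  have hne10 : (1 : Fin 2) ≠ 0 := by decide
  have hne01 : (0 : Fin 2) ≠ 1 := by decide
  have hF1 : ∀ ω, Y ω * (if D ω = 1 ∧ T ω = t then 1 else 0)
      = (Y1 ω * (if D ω = 1 then 1 else 0)) * (if T ω = t then 1 else 0) := by
    intro ω
    by_cases h1 : D ω = 1 <;> by_cases h2 : T ω = t <;>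
      simp [hY ω, h1, h2, hne10, hne01]
  have hF0 : ∀ ω, Y ω * (if D ω = 0 ∧ T ω = t then 1 else 0)
      = (Y0 ω * (if D ω = 0 then 1 else 0)) * (if T ω = t then 1 else 0) := by
    intro ω
    by_cases h1 : D ω = 0 <;> by_cases h2 : T ω = t <;>
      simp [hY ω, h1, h2, hne10, hne01]
  -- main per-arm computations
  have e1 : ∫ ω, Y ω * (if D ω = 1 ∧ T ω = t then 1 else 0) ∂μ
      = (μ S).toReal * ((∫ ω, Y1 ω ∂ν) * p) := by
    simp only [hF1]
    rw [← hSint fun ω => Y1 ω * (if D ω = 1 then 1 else 0),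
      show (∫ ω, Y1 ω ∂ν) * p = ∫ ω, Y1 ω * (if D ω = 1 then 1 else 0) ∂ν from by
        rw [hmul1, hone 1, hν1],
      hν_int, ← mul_assoc, mul_inv_cancel₀ hc.ne', one_mul]
  have e1' : ∫ ω, Y1 ω * (if T ω = t then 1 else 0) ∂μ
      = (μ S).toReal * (∫ ω, Y1 ω ∂ν) := by
    rw [← hSint Y1, hν_int Y1, ← mul_assoc, mul_inv_cancel₀ hc.ne', one_mul]
  have e0 : ∫ ω, Y ω * (if D ω = 0 ∧ T ω = t then 1 else 0) ∂μ
      = (μ S).toReal * ((∫ ω, Y0 ω ∂ν) * (1 - p)) := by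
    simp only [hF0]
    rw [← hSint fun ω => Y0 ω * (if D ω = 0 then 1 else 0),
      show (∫ ω, Y0 ω ∂ν) * (1 - p) = ∫ ω, Y0 ω * (if D ω = 0 then 1 else 0) ∂ν from by
        rw [hmul0, hone 0, hν0],
      hν_int, ← mul_assoc, mul_inv_cancel₀ hc.ne', one_mul]
  have e0' : ∫ ω, Y0 ω * (if T ω = t then 1 else 0) ∂μ
      = (μ S).toReal * (∫ ω, Y0 ω ∂ν) := by
    rw [← hSint Y0, hν_int Y0, ← mul_assoc, mul_inv_cancel₀ hc.ne', one_mul]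
  -- integrability for splitting
  have hM : 0 ≤ M := le_trans (abs_nonneg _) (hY0b (Classical.arbitrary Ω))
  have hYmeas : Measurable Y := by
    have : Y = fun ω => Y1 ω * (if D ω = 1 then 1 else 0) + Y0 ω * (if D ω = 0 then 1 else 0) :=
      funext hY
    rw [this]
    exact (hY1m.mul hind1m).add (hY0m.mul hind0m)
  have hYb : ∀ ω, |Y ω| ≤ M := by
    intro ω
    have h2 : ∀ x : Fin 2, x = 0 ∨ x = 1 := by decide
    rcases h2 (D ω) with h | h <;>
      simp [hY ω, h, hne10, hne01] <;> [exact hY0b ω; exact hY1b ω]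
  have hprod : ∀ (f : Ω → ℝ), (∀ ω, |f ω| ≤ M) → ∀ (c : Ω → Prop) (ω : Ω) (inst : Decidable (c ω)),
      |f ω * (if c ω then (1:ℝ) else 0)| ≤ M := by
    intro f hf c ω inst
    by_cases h : c ω <;> simp [h, hM, hf ω]
  have hTset : MeasurableSet {ω | T ω = t} := hT (measurableSet_singleton t)
  have hD1T : MeasurableSet {ω | D ω = 1 ∧ T ω = t} := by
    have : {ω | D ω = 1 ∧ T ω = t} = D ⁻¹' {1} ∩ {ω | T ω = t} := by ext ω; simp
    rw [this]; exact (hD (measurableSet_singleton 1)).inter hTset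
  have hD0T : MeasurableSet {ω | D ω = 0 ∧ T ω = t} := by
    have : {ω | D ω = 0 ∧ T ω = t} = D ⁻¹' {0} ∩ {ω | T ω = t} := by ext ω; simp
    rw [this]; exact (hD (measurableSet_singleton 0)).inter hTset
  have int1 : Integrable (fun ω => Y ω * (if D ω = 1 ∧ T ω = t then 1 else 0)) μ :=
    aux_int_bdd μ (hYmeas.mul (Measurable.ite hD1T measurable_const measurable_const))
      (fun ω => hprod Y hYb (fun ω => D ω = 1 ∧ T ω = t) ω _)
  have int0 : Integrable (fun ω => Y ω * (if D ω = 0 ∧ T ω = t then 1 else 0)) μ :=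
    aux_int_bdd μ (hYmeas.mul (Measurable.ite hD0T measurable_const measurable_const))
      (fun ω => hprod Y hYb (fun ω => D ω = 0 ∧ T ω = t) ω _)
  have intY1T : Integrable (fun ω => Y1 ω * (if T ω = t then 1 else 0)) μ :=
    aux_int_bdd μ (hY1m.mul (Measurable.ite hTset measurable_const measurable_const))
      (fun ω => hprod Y1 hY1b (fun ω => T ω = t) ω _)
  have intY0T : Integrable (fun ω => Y0 ω * (if T ω = t then 1 else 0)) μ :=
    aux_int_bdd μ (hY0m.mul (Measurable.ite hTset measurable_const measurable_const))
      (fun ω => hprod Y0 hY0b (fun ω => T ω = t) ω _)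
  -- split and conclude
  have hsplit : ∫ ω, (Y ω * (if D ω = 1 ∧ T ω = t then 1 else 0) / p
        - Y ω * (if D ω = 0 ∧ T ω = t then 1 else 0) / (1 - p)) ∂μ
      = (∫ ω, Y ω * (if D ω = 1 ∧ T ω = t then 1 else 0) ∂μ) / p
        - (∫ ω, Y ω * (if D ω = 0 ∧ T ω = t then 1 else 0) ∂μ) / (1 - p) := by
    rw [integral_sub (int1.div_const p) (int0.div_const (1 - p)),
      integral_div, integral_div]
  have hsplitR : ∫ ω, (Y1 ω - Y0 ω) * (if T ω = t then 1 else 0) ∂μ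
      = (∫ ω, Y1 ω * (if T ω = t then 1 else 0) ∂μ)
        - ∫ ω, Y0 ω * (if T ω = t then 1 else 0) ∂μ := by
    rw [← integral_sub intY1T intY0T]
    congr 1
    ext ω
    ring
  rw [hsplit, hsplitR, e1, e0, e1', e0']
  have hp1' : (1:ℝ) - p ≠ 0 := by linarith
  field_simp
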